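/- Let Q_1, …, Q_s be finite groups and let m be a natural number. Let G = F_m * Q_1 * ⋯ * Q_s be the free product of the free group F_m with the groups Q_p, and let φ : G → Q_1 × ⋯ × Q_s be the homomorphism that is trivial on F_m and maps each factor Q_p identically onto the p-th coordinate of the direct product. Then φ is surjective, the kernel of φ is a free group, and the kernel of φ has finite index in G equal to |Q_1|⋯|Q_s|. -/

import Mathlib

open Monoid Function

namespace Stmt0

variable {m s : ℕ} {Q : Fin s → Type} [∀ p, Group (Q p)]

/-- the projection homomorphism -/
def φ0 : Coprod (FreeGroup (Fin m)) (CoprodI Q) →* ∀ p, Q p :=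
  Coprod.lift 1 (CoprodI.lift fun p => MonoidHom.mulSingle Q p)

/-- inclusion of the factor `Q j` -/
def eH (j : Fin s) : Q j →* Coprod (FreeGroup (Fin m)) (CoprodI Q) :=
  Coprod.inr.comp CoprodI.of

lemma φ0_inl (w : FreeGroup (Fin m)) : (φ0 (Q := Q)) (Coprod.inl w) = 1 := by
  simp [φ0]

lemma φ0_e (j : Fin s) (q : Q j) : φ0 (m := m) (eH j q) = MonoidHom.mulSingle Q j q := by
  simp [φ0, eH]

/-- partial transversal: product of the letters with index `≥ k` -/
def tT (k : ℕ) (p : ∀ i, Q i) : Coprod (FreeGroup (Fin m)) (CoprodI Q) :=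
  (((List.finRange s).drop k).map fun j => eH j (p j)).prod

lemma tT_ge (k : ℕ) (hk : s ≤ k) (p : ∀ i, Q i) : tT (m := m) k p = 1 := by
  unfold tT
  rw [List.drop_eq_nil_of_le (by simpa using hk)]
  simp

lemma tT_lt (k : ℕ) (hk : k < s) (p : ∀ i, Q i) :
    tT (m := m) k p = eH ⟨k, hk⟩ (p ⟨k, hk⟩) * tT (k + 1) p := by
  unfold tT
  rw [List.drop_eq_getElem_cons (by simpa using hk)]
  simp

/-- the transversal -/
def t (p : ∀ i, Q i) : Coprod (FreeGroup (Fin m)) (CoprodI Q) := tT 0 p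

lemma φ0_tT (n : ℕ) : ∀ k, s ≤ k + n → ∀ (p : ∀ i, Q i) (i : Fin s),
    φ0 (m := m) (tT k p) i = if k ≤ (i : ℕ) then p i else 1 := by
  induction n with
  | zero =>
    intro k hk p i
    rw [tT_ge k (by omega), map_one, if_neg (by omega)]
    rfl
  | succ n ih =>
    intro k hk p i
    by_cases h : s ≤ k
    · rw [tT_ge k h, map_one, if_neg (by omega)]
      rfl
    · rw [tT_lt k (by omega), map_mul, φ0_e, Pi.mul_apply, ih (k + 1) (by omega) p i]
      by_cases hik : i = ⟨k, by omega⟩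
      · subst hik
        simp
      · have hik' : (i : ℕ) ≠ k := fun hc => hik (Fin.ext hc)
        rw [MonoidHom.mulSingle_apply, Pi.mulSingle_eq_of_ne hik, one_mul]
        by_cases hki : k ≤ (i : ℕ)
        · rw [if_pos hki, if_pos (by omega)]
        · rw [if_neg hki, if_neg (by omega)]

lemma φ0_t (p : ∀ i, Q i) : φ0 (m := m) (t p) = p := by
  funext i
  rw [t, φ0_tT s 0 (by omega) p i, if_pos (Nat.zero_le _)]

lemma tT_congr (n : ℕ) : ∀ k, s ≤ k + n → ∀ (p p' : ∀ i, Q i),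
    (∀ i : Fin s, k ≤ (i : ℕ) → p i = p' i) → tT (m := m) k p = tT k p' := by
  induction n with
  | zero => intro k hk p p' _; rw [tT_ge k (by omega), tT_ge k (by omega)]
  | succ n ih =>
    intro k hk p p' h
    by_cases hks : s ≤ k
    · rw [tT_ge k hks, tT_ge k hks]
    · rw [tT_lt k (by omega), tT_lt k (by omega),
        h ⟨k, by omega⟩ le_rfl, ih (k + 1) (by omega) p p' fun i hi => h i (by omega)]

lemma t_eq_tT (k : ℕ) (hk : k ≤ s) (p : ∀ i, Q i)
    (h : ∀ i : Fin s, (i : ℕ) < k → p i = 1) : t (m := m) p = tT k p := by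
  induction k with
  | zero => rfl
  | succ k ih =>
    rw [ih (by omega) fun i hi => h i (by omega), tT_lt k (by omega),
      h ⟨k, by omega⟩ (by simp), map_one, one_mul]

lemma t_one : t (m := m) (Q := Q) 1 = 1 := by
  rw [t_eq_tT s le_rfl 1 fun i _ => rfl, tT_ge s le_rfl]

/-- index type for the free basis of the kernel -/
abbrev Idx (m s : ℕ) (Q : Fin s → Type) [∀ p, Group (Q p)] : Type :=
  (Fin m × ∀ p, Q p) ⊕
    Σ j : Fin s, {π : ∀ p, Q p // π j = 1 ∧ ¬ ∀ i : Fin s, (i : ℕ) < (j : ℕ) → π i = 1} ×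
      {q : Q j // q ≠ 1}

open scoped Classical in
/-- the cocycle values for the factor `Q j` -/
noncomputable def D (j : Fin s) (π : ∀ p, Q p) : FreeGroup (Idx m s Q) :=
  if htree : ∀ i : Fin s, (i : ℕ) < (j : ℕ) → π i = 1 then 1
  else if h : π j = 1 then 1
  else FreeGroup.of (Sum.inr ⟨j, ⟨⟨Function.update π j 1, by
    refine ⟨Function.update_self .., fun hcon => htree fun i hi => ?_⟩
    have hne : i ≠ j := Fin.ne_of_val_ne (Nat.ne_of_lt hi)
    rw [← Function.update_of_ne hne 1 π]
    exact hcon i hi⟩, ⟨π j, h⟩⟩⟩)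

lemma D_tree (j : Fin s) (π : ∀ p, Q p) (h : ∀ i : Fin s, (i : ℕ) < (j : ℕ) → π i = 1) :
    D (m := m) j π = 1 := by
  rw [D, dif_pos h]

lemma D_one (j : Fin s) (π : ∀ p, Q p) (h : π j = 1) : D (m := m) j π = 1 := by
  rw [D]
  split_ifs <;> simp_all

lemma D_gen (j : Fin s) (π : ∀ p, Q p) (hπ1 : π j = 1)
    (hne : ¬ ∀ i : Fin s, (i : ℕ) < (j : ℕ) → π i = 1) (q : Q j) (hq : q ≠ 1) :
    D (m := m) j (MonoidHom.mulSingle Q j q * π) =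
      FreeGroup.of (Sum.inr ⟨j, ⟨⟨π, hπ1, hne⟩, ⟨q, hq⟩⟩⟩) := by
  have hval : ∀ i : Fin s, i ≠ j → (MonoidHom.mulSingle Q j q * π) i = π i := by
    intro i hi
    rw [Pi.mul_apply, MonoidHom.mulSingle_apply, Pi.mulSingle_eq_of_ne hi, one_mul]
  have hj : (MonoidHom.mulSingle Q j q * π) j = q := by
    rw [Pi.mul_apply, MonoidHom.mulSingle_apply, Pi.mulSingle_eq_same, hπ1, mul_one]
  have h1 : ¬ ∀ i : Fin s, (i : ℕ) < (j : ℕ) → (MonoidHom.mulSingle Q j q * π) i = 1 := by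
    intro hcon
    exact hne fun i hi => by
      rw [← hval i (Fin.ne_of_val_ne (Nat.ne_of_lt hi))]; exact hcon i hi
  have h2 : ¬ (MonoidHom.mulSingle Q j q * π) j = 1 := by rw [hj]; exact hq
  rw [D, dif_neg h1, dif_neg h2]
  have hupd : Function.update (MonoidHom.mulSingle Q j q * π) j 1 = π := by
    funext i
    by_cases hi : i = j
    · subst hi; rw [Function.update_self, hπ1]
    · rw [Function.update_of_ne hi, hval i hi]
  exact congrArg
    (fun z : {π : ∀ p, Q p // π j = 1 ∧ ¬ ∀ i : Fin s, (i : ℕ) < (j : ℕ) → π i = 1} ×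
        {q : Q j // q ≠ 1} =>
      (FreeGroup.of (Sum.inr ⟨j, z⟩) : FreeGroup (Idx m s Q)))
    (Prod.ext (Subtype.ext hupd) (Subtype.ext hj))

/-- permutation fixing the first coordinate -/
def permF (f : (∀ p, Q p) → FreeGroup (Idx m s Q)) :
    Equiv.Perm ((∀ p, Q p) × FreeGroup (Idx m s Q)) where
  toFun x := (x.1, f x.1 * x.2)
  invFun x := (x.1, (f x.1)⁻¹ * x.2)
  left_inv x := by simp
  right_inv x := by simp

/-- permutation translating the first coordinate, with coboundary cocycle -/
def permU (u : ∀ p, Q p) (d : (∀ p, Q p) → FreeGroup (Idx m s Q)) :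
    Equiv.Perm ((∀ p, Q p) × FreeGroup (Idx m s Q)) where
  toFun x := (u * x.1, d (u * x.1) * (d x.1)⁻¹ * x.2)
  invFun x := (u⁻¹ * x.1, d (u⁻¹ * x.1) * (d x.1)⁻¹ * x.2)
  left_inv x := by
    simp only [inv_mul_cancel_left]
    refine Prod.ext rfl ?_
    simp [mul_assoc]
  right_inv x := by
    simp only [mul_inv_cancel_left]
    refine Prod.ext rfl ?_
    simp [mul_assoc]

lemma permU_one (d : (∀ p, Q p) → FreeGroup (Idx m s Q)) : permU (m := m) 1 d = 1 := by
  ext x <;> simp [permU]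

lemma permU_mul (u u' : ∀ p, Q p) (d : (∀ p, Q p) → FreeGroup (Idx m s Q)) :
    permU (m := m) (u * u') d = permU u d * permU u' d := by
  ext x <;> simp [permU, mul_assoc]

/-- the action of the factor `Q j` -/
noncomputable def permQHom (j : Fin s) :
    Q j →* Equiv.Perm ((∀ p, Q p) × FreeGroup (Idx m s Q)) where
  toFun q := permU (MonoidHom.mulSingle Q j q) (D (m := m) j)
  map_one' := by
    show permU (MonoidHom.mulSingle Q j 1) (D (m := m) j) = 1
    rw [map_one, permU_one]
  map_mul' q q' := by
    show permU (MonoidHom.mulSingle Q j (q * q')) (D (m := m) j) = _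
    rw [map_mul, permU_mul]

/-- the rewriting action of the whole group -/
noncomputable def Ψ : Coprod (FreeGroup (Fin m)) (CoprodI Q) →*
    Equiv.Perm ((∀ p, Q p) × FreeGroup (Idx m s Q)) :=
  Coprod.lift (FreeGroup.lift fun x => permF fun p => FreeGroup.of (Sum.inl (x, p)))
    (CoprodI.lift permQHom)

/-- the cocycle -/
noncomputable def c (g : Coprod (FreeGroup (Fin m)) (CoprodI Q)) (p : ∀ i, Q i) :
    FreeGroup (Idx m s Q) := ((Ψ g) (p, 1)).2

lemma Ψ_inl_of (x : Fin m) : Ψ (Q := Q) (Coprod.inl (FreeGroup.of x)) =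
    permF fun p => FreeGroup.of (Sum.inl (x, p)) := by
  rw [Ψ, Coprod.lift_apply_inl, FreeGroup.lift_apply_of]

lemma Ψ_e (j : Fin s) (q : Q j) :
    Ψ (m := m) (eH j q) = permU (MonoidHom.mulSingle Q j q) (D (m := m) j) := by
  rw [Ψ, eH]
  simp only [MonoidHom.comp_apply, Coprod.lift_apply_inr, CoprodI.lift_of]
  rfl

lemma Ψ_fst (g : Coprod (FreeGroup (Fin m)) (CoprodI Q))
    (x : (∀ p, Q p) × FreeGroup (Idx m s Q)) : ((Ψ g) x).1 = φ0 g * x.1 := by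
  let S : Subgroup (Coprod (FreeGroup (Fin m)) (CoprodI Q)) :=
    { carrier := {g | ∀ x : (∀ p, Q p) × FreeGroup (Idx m s Q), ((Ψ g) x).1 = φ0 g * x.1}
      one_mem' := by intro x; simp
      mul_mem' := by
        intro g h hg hh x
        rw [map_mul, map_mul, Equiv.Perm.mul_apply, hg, hh, mul_assoc]
      inv_mem' := by
        intro g hg x
        have key : (Ψ g) ((Ψ g⁻¹) x) = x := by
          rw [map_inv]; exact Equiv.apply_symm_apply _ _
        have h1 : x.1 = φ0 g * ((Ψ g⁻¹) x).1 := by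
          conv_lhs => rw [← key]
          exact hg _
        have h2 : φ0 (m := m) (Q := Q) g⁻¹ = (φ0 g)⁻¹ := map_inv _ _
        rw [h2, eq_inv_mul_iff_mul_eq]
        exact h1.symm }
  have hS : ∀ g, g ∈ S := by
    intro g
    induction g using Coprod.induction_on with
    | inl w =>
      induction w using FreeGroup.induction_on with
      | C1 => rw [map_one]; exact S.one_mem
      | of x =>
        intro y
        show ((Ψ (Coprod.inl (FreeGroup.of x))) y).1 = φ0 (Coprod.inl (FreeGroup.of x)) * y.1
        rw [Ψ_inl_of, φ0_inl, one_mul]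
        rfl
      | inv_of x hx => rw [map_inv]; exact S.inv_mem hx
      | mul x y hx hy => rw [map_mul]; exact S.mul_mem hx hy
    | inr h =>
      induction h using CoprodI.induction_on with
      | one => rw [map_one]; exact S.one_mem
      | of j q =>
        intro y
        rw [show Coprod.inr (CoprodI.of q) = eH (m := m) j q from rfl, Ψ_e, φ0_e]
        rfl
      | mul a b ha hb => rw [map_mul]; exact S.mul_mem ha hb
    | mul a b ha hb => exact S.mul_mem ha hb
  exact hS g x

lemma Ψ_snd (g : Coprod (FreeGroup (Fin m)) (CoprodI Q))
    (x : (∀ p, Q p) × FreeGroup (Idx m s Q)) : ((Ψ g) x).2 = c g x.1 * x.2 := by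
  let S : Subgroup (Coprod (FreeGroup (Fin m)) (CoprodI Q)) :=
    { carrier := {g | ∀ x : (∀ p, Q p) × FreeGroup (Idx m s Q),
        ((Ψ g) x).2 = ((Ψ g) (x.1, 1)).2 * x.2}
      one_mem' := by intro x; simp
      mul_mem' := by
        intro g h hg hh x
        have h1 : ((Ψ h) x).1 = ((Ψ h) (x.1, 1)).1 := by rw [Ψ_fst, Ψ_fst]
        rw [map_mul, Equiv.Perm.mul_apply, Equiv.Perm.mul_apply, hg ((Ψ h) x),
          hg ((Ψ h) (x.1, 1)), hh x, h1, hh (x.1, 1)]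
        simp [mul_assoc]
      inv_mem' := by
        intro g hg x
        have key : ∀ y, (Ψ g) ((Ψ g⁻¹) y) = y := by
          intro y; rw [map_inv]; exact Equiv.apply_symm_apply _ _
        have h1 : ((Ψ g⁻¹) x).1 = ((Ψ g⁻¹) (x.1, 1)).1 := by rw [Ψ_fst, Ψ_fst]
        have h2 : x.2 = ((Ψ g) (((Ψ g⁻¹) x).1, 1)).2 * ((Ψ g⁻¹) x).2 := by
          conv_lhs => rw [← key x]
          exact hg _
        have h3 : (1 : FreeGroup (Idx m s Q)) =
            ((Ψ g) (((Ψ g⁻¹) (x.1, 1)).1, 1)).2 * ((Ψ g⁻¹) (x.1, 1)).2 := by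
          conv_lhs => rw [show (1 : FreeGroup (Idx m s Q)) = ((x.1, (1 : FreeGroup (Idx m s Q))) :
            (∀ p, Q p) × FreeGroup (Idx m s Q)).2 from rfl, ← key (x.1, 1)]
          exact hg _
        rw [← h1] at h3
        have h4 : ((Ψ g⁻¹) (x.1, 1)).2 = (((Ψ g) (((Ψ g⁻¹) x).1, 1)).2)⁻¹ :=
          eq_inv_of_mul_eq_one_right h3.symm
        rw [h4, eq_inv_mul_iff_mul_eq, ← h2]
      }
  have hS : ∀ g, g ∈ S := by
    intro g
    induction g using Coprod.induction_on with
    | inl w =>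
      induction w using FreeGroup.induction_on with
      | C1 => rw [map_one]; exact S.one_mem
      | of x =>
        intro y
        show ((Ψ (Coprod.inl (FreeGroup.of x))) y).2 =
          ((Ψ (Coprod.inl (FreeGroup.of x))) (y.1, 1)).2 * y.2
        rw [Ψ_inl_of]
        show (FreeGroup.of (Sum.inl (x, y.1)) : FreeGroup (Idx m s Q)) * y.2 =
          FreeGroup.of (Sum.inl (x, y.1)) * 1 * y.2
        rw [mul_one]
      | inv_of x hx => rw [map_inv]; exact S.inv_mem hx
      | mul x y hx hy => rw [map_mul]; exact S.mul_mem hx hy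
    | inr h =>
      induction h using CoprodI.induction_on with
      | one => rw [map_one]; exact S.one_mem
      | of j q =>
        intro y
        rw [show Coprod.inr (CoprodI.of q) = eH (m := m) j q from rfl, Ψ_e]
        show D j (MonoidHom.mulSingle Q j q * y.1) * (D j y.1)⁻¹ * y.2 =
          D j (MonoidHom.mulSingle Q j q * (y.1, (1 : FreeGroup (Idx m s Q))).1) *
            (D j (y.1, (1 : FreeGroup (Idx m s Q))).1)⁻¹ * 1 * y.2
        rw [mul_one]
      | mul a b ha hb => rw [map_mul]; exact S.mul_mem ha hb
    | mul a b ha hb => exact S.mul_mem ha hb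
  exact hS g x

lemma c_cocycle (g h : Coprod (FreeGroup (Fin m)) (CoprodI Q)) (p : ∀ i, Q i) :
    c (g * h) p = c g (φ0 h * p) * c h p := by
  have h1 : ((Ψ h) ((p, 1) : (∀ p, Q p) × FreeGroup (Idx m s Q))).1 = φ0 h * p := Ψ_fst h (p, 1)
  have : c (g * h) p = ((Ψ g) ((Ψ h) (p, 1))).2 := by
    rw [c, map_mul]; rfl
  rw [this, Ψ_snd g, h1]
  rfl

lemma c_one (p : ∀ i, Q i) : c (m := m) (Q := Q) 1 p = 1 := by
  rw [c, map_one]; rfl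

lemma c_inv (g : Coprod (FreeGroup (Fin m)) (CoprodI Q)) (p : ∀ i, Q i) :
    c g⁻¹ (φ0 g * p) = (c g p)⁻¹ := by
  have := c_cocycle g⁻¹ g p
  rw [inv_mul_cancel, c_one] at this
  exact eq_inv_of_mul_eq_one_left this.symm

lemma c_inl (x : Fin m) (p : ∀ i, Q i) :
    c (Q := Q) (Coprod.inl (FreeGroup.of x)) p = FreeGroup.of (Sum.inl (x, p)) := by
  rw [c, Ψ_inl_of]
  exact mul_one _

lemma c_e (j : Fin s) (q : Q j) (p : ∀ i, Q i) :
    c (m := m) (eH j q) p = D j (MonoidHom.mulSingle Q j q * p) * (D j p)⁻¹ := by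
  rw [c, Ψ_e]
  exact mul_one _

lemma c_tT (n : ℕ) : ∀ k, s ≤ k + n → ∀ p : ∀ i, Q i, c (m := m) (tT k p) 1 = 1 := by
  induction n with
  | zero => intro k hk p; rw [tT_ge k (by omega), c_one]
  | succ n ih =>
    intro k hk p
    by_cases h : s ≤ k
    · rw [tT_ge k h, c_one]
    · have hks : k < s := by omega
      rw [tT_lt k hks, c_cocycle, ih (k + 1) (by omega) p, mul_one, c_e]
      have hcoord : ∀ i : Fin s, (i : ℕ) < k → (φ0 (m := m) (tT (k + 1) p) * 1) i = 1 := by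
        intro i hi
        rw [Pi.mul_apply, φ0_tT n (k + 1) (by omega) p i, if_neg (by omega), one_mul]
        rfl
      have hcoord2 : ∀ i : Fin s, (i : ℕ) < ((⟨k, hks⟩ : Fin s) : ℕ) →
          (MonoidHom.mulSingle Q ⟨k, hks⟩ (p ⟨k, hks⟩) * (φ0 (m := m) (tT (k + 1) p) * 1)) i
            = 1 := by
        intro i hi
        have hik : (i : ℕ) < k := by simpa using hi
        rw [Pi.mul_apply, MonoidHom.mulSingle_apply,
          Pi.mulSingle_eq_of_ne (Fin.ne_of_val_ne (by omega : (i : ℕ) ≠ k)), one_mul]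
        exact hcoord i hik
      have hcoord3 : ∀ i : Fin s, (i : ℕ) < ((⟨k, hks⟩ : Fin s) : ℕ) →
          (φ0 (m := m) (tT (k + 1) p) * 1) i = 1 := by
        intro i hi
        exact hcoord i (by simpa using hi)
      rw [D_tree _ _ hcoord2, D_tree _ _ hcoord3, inv_one, mul_one]

lemma c_t_one (p : ∀ i, Q i) : c (m := m) (t p) 1 = 1 := c_tT s 0 (by omega) p

/-- the free generators of the kernel -/
def gens : Idx m s Q → Coprod (FreeGroup (Fin m)) (CoprodI Q)
  | Sum.inl (x, p) => (t p)⁻¹ * (Coprod.inl (FreeGroup.of x) * t p)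
  | Sum.inr ⟨j, ⟨⟨π, _⟩, ⟨q, _⟩⟩⟩ => (t (MonoidHom.mulSingle Q j q * π))⁻¹ * (eH j q * t π)

noncomputable def Φ' : FreeGroup (Idx m s Q) →* Coprod (FreeGroup (Fin m)) (CoprodI Q) :=
  FreeGroup.lift gens

lemma Φ'_of (i : Idx m s Q) : Φ' (FreeGroup.of i) = gens i := FreeGroup.lift_apply_of

lemma φ0_gens (i : Idx m s Q) : φ0 (gens i) = 1 := by
  rcases i with ⟨x, p⟩ | ⟨j, ⟨π, hπ⟩, ⟨q, hq⟩⟩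
  · show φ0 ((t p)⁻¹ * (Coprod.inl (FreeGroup.of x) * t p)) = 1
    rw [map_mul, map_mul, map_inv, φ0_inl, φ0_t, one_mul, inv_mul_cancel]
  · show φ0 ((t (MonoidHom.mulSingle Q j q * π))⁻¹ * (eH j q * t π)) = 1
    rw [map_mul, map_mul, map_inv, φ0_e, φ0_t, φ0_t, inv_mul_cancel]

lemma c_gens (i : Idx m s Q) : c (gens i) 1 = FreeGroup.of i := by
  rcases i with ⟨x, p⟩ | ⟨j, ⟨π, hπ1, hπ2⟩, ⟨q, hq⟩⟩
  · show c ((t p)⁻¹ * (Coprod.inl (FreeGroup.of x) * t p)) 1 = _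
    have h1 : φ0 (m := m) (Coprod.inl (FreeGroup.of x) * t p) * 1 = φ0 (m := m) (t p) * 1 := by
      rw [map_mul, φ0_inl, one_mul]
    rw [c_cocycle, h1, c_inv, c_cocycle, φ0_t (m := m), c_t_one]
    simp only [inv_one, one_mul, mul_one]
    rw [c_inl]
  · show c ((t (MonoidHom.mulSingle Q j q * π))⁻¹ * (eH j q * t π)) 1 = _
    have h1 : φ0 (m := m) (eH j q * t π) * 1 = φ0 (m := m) (t (MonoidHom.mulSingle Q j q * π)) * 1 := by
      rw [map_mul, φ0_e, φ0_t, φ0_t]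
    rw [c_cocycle, h1, c_inv, c_cocycle, φ0_t (m := m), c_t_one]
    simp only [inv_one, one_mul, mul_one]
    rw [c_e, D_one j π hπ1, inv_one, mul_one, D_gen j π hπ1 hπ2 q hq, c_t_one, mul_one]

lemma t_tree (j : Fin s) (r : Q j) (π : ∀ i, Q i) (hπ1 : π j = 1)
    (htree : ∀ i : Fin s, (i : ℕ) < (j : ℕ) → π i = 1) :
    t (m := m) (MonoidHom.mulSingle Q j r * π) = eH j r * t π := by
  have hne : ∀ i : Fin s, i ≠ j → (MonoidHom.mulSingle Q j r * π) i = π i := by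
    intro i hi
    rw [Pi.mul_apply, MonoidHom.mulSingle_apply, Pi.mulSingle_eq_of_ne hi, one_mul]
  have h1 : t (m := m) (MonoidHom.mulSingle Q j r * π) = tT (j : ℕ) (MonoidHom.mulSingle Q j r * π) :=
    t_eq_tT (j : ℕ) (le_of_lt j.isLt) _ fun i hi =>
      (hne i (Fin.ne_of_val_ne (Nat.ne_of_lt hi))).trans (htree i hi)
  have h2 : tT (m := m) (j : ℕ) (MonoidHom.mulSingle Q j r * π) =
      eH j ((MonoidHom.mulSingle Q j r * π) j) * tT ((j : ℕ) + 1) (MonoidHom.mulSingle Q j r * π) := by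
    have := tT_lt (m := m) (j : ℕ) j.isLt (MonoidHom.mulSingle Q j r * π)
    rwa [Fin.eta] at this
  have hval : (MonoidHom.mulSingle Q j r * π) j = r := by
    rw [Pi.mul_apply, MonoidHom.mulSingle_apply, Pi.mulSingle_eq_same, hπ1, mul_one]
  have h3 : tT (m := m) ((j : ℕ) + 1) (MonoidHom.mulSingle Q j r * π) = tT ((j : ℕ) + 1) π :=
    tT_congr s ((j : ℕ) + 1) (by omega) _ _ fun i hi =>
      hne i (Fin.ne_of_val_ne (by omega))
  have h4 : t (m := m) π = tT ((j : ℕ) + 1) π := by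
    refine t_eq_tT ((j : ℕ) + 1) (by omega) π fun i hi => ?_
    by_cases hij : i = j
    · subst hij; exact hπ1
    · exact htree i (by
        have : (i : ℕ) ≠ (j : ℕ) := fun hc => hij (Fin.ext hc)
        omega)
  rw [h1, h2, hval, h3, ← h4]

lemma mem_range_aux (g : Coprod (FreeGroup (Fin m)) (CoprodI Q)) (p : ∀ i, Q i) :
    (t (φ0 g * p))⁻¹ * (g * t p) ∈ Φ'.range := by
  revert p
  let S : Subgroup (Coprod (FreeGroup (Fin m)) (CoprodI Q)) :=
    { carrier := {g | ∀ p : ∀ i, Q i, (t (φ0 g * p))⁻¹ * (g * t p) ∈ Φ'.range}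
      one_mem' := by
        intro p
        have h1 : φ0 (m := m) (Q := Q) 1 * p = p := by rw [map_one, one_mul]
        rw [h1, one_mul, inv_mul_cancel]
        exact one_mem _
      mul_mem' := by
        intro g h hg hh p
        have e1 := hg (φ0 h * p)
        have e2 := hh p
        have key : (t (φ0 (g * h) * p))⁻¹ * ((g * h) * t p) =
            ((t (φ0 g * (φ0 h * p)))⁻¹ * (g * t (φ0 h * p))) *
              ((t (φ0 h * p))⁻¹ * (h * t p)) := by
          rw [map_mul, mul_assoc (φ0 g)]
          group
        rw [key]
        exact mul_mem e1 e2
      inv_mem' := by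
        intro g hg p
        have e1 := hg (φ0 g⁻¹ * p)
        have hp : φ0 g * (φ0 g⁻¹ * p) = p := by rw [map_inv, mul_inv_cancel_left]
        rw [hp] at e1
        have key : (t (φ0 g⁻¹ * p))⁻¹ * (g⁻¹ * t p) =
            ((t p)⁻¹ * (g * t (φ0 g⁻¹ * p)))⁻¹ := by group
        rw [key]
        exact inv_mem e1 }
  suffices hS : ∀ g, g ∈ S by exact hS g
  intro g
  induction g using Coprod.induction_on with
  | inl w =>
    induction w using FreeGroup.induction_on with
    | C1 => rw [map_one]; exact S.one_mem
    | of x =>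
      show ∀ p : ∀ i, Q i, _ ∈ Φ'.range
      intro p
      show (t (φ0 (Coprod.inl (FreeGroup.of x)) * p))⁻¹ *
        (Coprod.inl (FreeGroup.of x) * t p) ∈ Φ'.range
      have h1 : φ0 (m := m) (Coprod.inl (FreeGroup.of x)) * p = p := by rw [φ0_inl, one_mul]
      rw [h1]
      exact ⟨FreeGroup.of (Sum.inl (x, p)), by rw [Φ'_of]; rfl⟩
    | inv_of x hx => rw [map_inv]; exact S.inv_mem hx
    | mul x y hx hy => rw [map_mul]; exact S.mul_mem hx hy
  | inr h =>
    induction h using CoprodI.induction_on with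
    | one => rw [map_one]; exact S.one_mem
    | of j q =>
      show ∀ p : ∀ i, Q i, _ ∈ Φ'.range
      intro p
      set π := Function.update p j 1 with hπdef
      have hπ1 : π j = 1 := Function.update_self j 1 p
      have hπne : ∀ i : Fin s, i ≠ j → π i = p i := fun i hi => Function.update_of_ne hi 1 p
      have h1 : MonoidHom.mulSingle Q j (p j) * π = p := by
        funext i
        by_cases hij : i = j
        · subst hij
          rw [Pi.mul_apply, MonoidHom.mulSingle_apply, Pi.mulSingle_eq_same, hπ1, mul_one]
        · rw [Pi.mul_apply, MonoidHom.mulSingle_apply, Pi.mulSingle_eq_of_ne hij, one_mul,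
            hπne i hij]
      have h2 : MonoidHom.mulSingle Q j (q * p j) * π =
          φ0 (m := m) (Coprod.inr (CoprodI.of q)) * p := by
        rw [show Coprod.inr (CoprodI.of q) = eH (m := m) j q from rfl, φ0_e]
        funext i
        by_cases hij : i = j
        · subst hij
          rw [Pi.mul_apply, Pi.mul_apply, MonoidHom.mulSingle_apply, MonoidHom.mulSingle_apply,
            Pi.mulSingle_eq_same, Pi.mulSingle_eq_same, hπ1, mul_one]
        · rw [Pi.mul_apply, Pi.mul_apply, MonoidHom.mulSingle_apply, MonoidHom.mulSingle_apply,
            Pi.mulSingle_eq_of_ne hij, Pi.mulSingle_eq_of_ne hij, one_mul, one_mul, hπne i hij]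
      have hσ : ∀ r : Q j, (t (m := m) (MonoidHom.mulSingle Q j r * π))⁻¹ * (eH j r * t π) ∈ Φ'.range := by
        intro r
        by_cases hr : r = 1
        · subst hr
          have : (t (m := m) (MonoidHom.mulSingle Q j (1 : Q j) * π))⁻¹ * (eH j 1 * t π) = 1 := by
            rw [map_one, map_one, one_mul, one_mul, inv_mul_cancel]
          rw [this]
          exact one_mem _
        · by_cases htree : ∀ i : Fin s, (i : ℕ) < (j : ℕ) → π i = 1
          · rw [t_tree j r π hπ1 htree, inv_mul_cancel]
            exact one_mem _
          · exact ⟨FreeGroup.of (Sum.inr ⟨j, ⟨⟨π, hπ1, htree⟩, ⟨r, hr⟩⟩⟩), by rw [Φ'_of]; rfl⟩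
      have key : (t (m := m) (φ0 (m := m) (Coprod.inr (CoprodI.of q)) * p))⁻¹ * (Coprod.inr (CoprodI.of q) * t p) =
          ((t (MonoidHom.mulSingle Q j (q * p j) * π))⁻¹ * (eH j (q * p j) * t π)) *
            ((t (MonoidHom.mulSingle Q j (p j) * π))⁻¹ * (eH j (p j) * t π))⁻¹ := by
        rw [h1, h2, map_mul (eH j),
          show Coprod.inr (CoprodI.of q) = eH (m := m) j q from rfl]
        group
      rw [key]
      exact mul_mem (hσ _) (inv_mem (hσ _))
    | mul a b ha hb => rw [map_mul]; exact S.mul_mem ha hb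
  | mul a b ha hb => exact S.mul_mem ha hb

lemma ker_le_range : (φ0 (m := m) (Q := Q)).ker ≤ Φ'.range := by
  intro g hg
  have h := mem_range_aux g 1
  rw [MonoidHom.mem_ker.mp hg, mul_one, t_one, inv_one, one_mul, mul_one] at h
  exact h

lemma φ0_Φ' (w : FreeGroup (Idx m s Q)) : φ0 (Φ' w) = 1 := by
  have hcomp : (φ0 (m := m) (Q := Q)).comp Φ' = 1 :=
    FreeGroup.ext_hom _ _ fun i => by
      rw [MonoidHom.comp_apply, Φ'_of, φ0_gens]; rfl
  exact DFunLike.congr_fun hcomp w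

/-- the inverse isomorphism, as a cocycle evaluation -/
noncomputable def θ' : (φ0 (m := m) (Q := Q)).ker →* FreeGroup (Idx m s Q) where
  toFun k := c (k : Coprod (FreeGroup (Fin m)) (CoprodI Q)) 1
  map_one' := c_one 1
  map_mul' k k' := by
    show c ((k : Coprod (FreeGroup (Fin m)) (CoprodI Q)) * (k' : Coprod (FreeGroup (Fin m)) (CoprodI Q))) 1 = _
    rw [c_cocycle, MonoidHom.mem_ker.mp k'.2, mul_one]

/-- the corestriction of `Φ'` to the kernel -/
noncomputable def Φ'' : FreeGroup (Idx m s Q) →* (φ0 (m := m) (Q := Q)).ker :=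
  Φ'.codRestrict _ fun w => MonoidHom.mem_ker.mpr (φ0_Φ' w)

lemma θ'_Φ'' : (θ' (m := m) (Q := Q)).comp Φ'' = MonoidHom.id _ :=
  FreeGroup.ext_hom _ _ fun i => by
    show c (Φ' (FreeGroup.of i)) 1 = FreeGroup.of i
    rw [Φ'_of, c_gens]

lemma Φ''_bij : Function.Bijective (Φ'' (m := m) (Q := Q)) := by
  constructor
  · intro w w' h
    have h1 := DFunLike.congr_fun (θ'_Φ'' (m := m) (Q := Q)) w
    have h2 := DFunLike.congr_fun (θ'_Φ'' (m := m) (Q := Q)) w'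
    rw [MonoidHom.comp_apply, MonoidHom.id_apply] at h1 h2
    rw [← h1, ← h2, h]
  · rintro ⟨k, hk⟩
    obtain ⟨w, hw⟩ := ker_le_range hk
    exact ⟨w, Subtype.ext hw⟩

theorem main (m s : ℕ) (Q : Fin s → Type) [∀ p, Group (Q p)] [∀ p, Fintype (Q p)] :
    Function.Surjective (φ0 (m := m) (Q := Q)) ∧
      (∃ ι : Type, Nonempty (FreeGroup ι ≃* (φ0 (m := m) (Q := Q)).ker)) ∧
      (φ0 (m := m) (Q := Q)).ker.FiniteIndex ∧
      (φ0 (m := m) (Q := Q)).ker.index = ∏ p, Fintype.card (Q p) := by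
  have hsurj : Function.Surjective (φ0 (m := m) (Q := Q)) := fun f => ⟨t f, φ0_t f⟩
  have hindex : (φ0 (m := m) (Q := Q)).ker.index = ∏ p, Fintype.card (Q p) := by
    rw [Subgroup.index_ker, MonoidHom.range_eq_top_of_surjective _ hsurj,
      Nat.card_congr Subgroup.topEquiv.toEquiv, Nat.card_pi]
    exact Finset.prod_congr rfl fun p _ => Nat.card_eq_fintype_card
  refine ⟨hsurj, ⟨Idx m s Q, ⟨MulEquiv.ofBijective Φ'' Φ''_bij⟩⟩, ⟨?_⟩, hindex⟩
  rw [hindex]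
  exact Finset.prod_ne_zero_iff.mpr fun p _ => Fintype.card_ne_zero

end Stmt0

/-- Let `Q 0, …, Q (s-1)` be finite groups and `m : ℕ`. Let
`G = FreeGroup (Fin m) ∗ (CoprodI Q)` be the free product of the free group of rank `m`
with the groups `Q p`, and let `φ : G →* ∀ p, Q p` be the homomorphism that is trivial on
the free factor and maps each `Q p` identically onto the `p`-th coordinate of the direct
product. Then `φ` is surjective, its kernel is a free group, and its kernel has finite
index in `G` equal to `|Q 0| ⋯ |Q (s-1)|`. -/
theorem stmt0 (m s : ℕ) (Q : Fin s → Type) [∀ p, Group (Q p)] [∀ p, Fintype (Q p)]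
    (φ : Monoid.Coprod (FreeGroup (Fin m)) (Monoid.CoprodI Q) →* (∀ p, Q p))
    (hφ : φ = Monoid.Coprod.lift 1 (Monoid.CoprodI.lift fun p => MonoidHom.mulSingle Q p)) :
    Function.Surjective φ ∧
      (∃ ι : Type, Nonempty (FreeGroup ι ≃* φ.ker)) ∧
      φ.ker.FiniteIndex ∧
      φ.ker.index = ∏ p, Fintype.card (Q p) := by
  subst hφ
  exact Stmt0.main m s Q
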